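/- Let M be an m×m matrix with nonnegative entries. Then per M = 0 if and only if M contains an r×s submatrix of zeros (given by choosing r rows and s columns) with r + s = m + 1. -/
import Mathlib


/-- Frobenius–König theorem: a square matrix `M` with nonnegative entries has
zero permanent iff it contains an `r × s` all-zero submatrix with
`r + s = m + 1`. -/
theorem frobenius_koenig (m : ℕ) (M : Matrix (Fin m) (Fin m) ℝ)
    (hM : ∀ i j, 0 ≤ M i j) :
    (∑ τ : Equiv.Perm (Fin m), ∏ i : Fin m, M i (τ i)) = 0 ↔
      ∃ (R S : Finset (Fin m)), R.card + S.card = m + 1 ∧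
        ∀ i ∈ R, ∀ j ∈ S, M i j = 0 := by
  constructor
  · intro h
    have hterm : ∀ τ : Equiv.Perm (Fin m), ∏ i, M i (τ i) = 0 := by
      intro τ
      exact (Finset.sum_eq_zero_iff_of_nonneg
        (fun τ _ => Finset.prod_nonneg fun i _ => hM i (τ i))).mp h τ (Finset.mem_univ τ)
    set t : Fin m → Finset (Fin m) := fun i => Finset.univ.filter (fun j => M i j ≠ 0) with ht
    have hhall : ¬ ∀ (A : Finset (Fin m)), A.card ≤ (A.biUnion t).card := by
      intro hall
      obtain ⟨f, hf, hft⟩ := (Finset.all_card_le_biUnion_card_iff_exists_injective t).mp hall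
      have hbij := Finite.injective_iff_bijective.mp hf
      have := hterm (Equiv.ofBijective f hbij)
      rw [Finset.prod_eq_zero_iff] at this
      obtain ⟨i, _, hi⟩ := this
      have h2 := hft i
      simp only [ht, Finset.mem_filter] at h2
      exact h2.2 (by simpa using hi)
    push_neg at hhall
    obtain ⟨A, hA⟩ := hhall
    set N := A.biUnion t with hN
    have hNA : N.card + 1 ≤ A.card := hA
    obtain ⟨R, hRA, hRcard⟩ := Finset.exists_subset_card_eq hNA
    refine ⟨R, Nᶜ, ?_, ?_⟩
    · have hNm : N.card ≤ m := by simpa using Finset.card_le_univ N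
      rw [hRcard, Finset.card_compl]
      simp only [Fintype.card_fin]
      omega
    · intro i hi j hj
      by_contra hne
      exact (Finset.mem_compl.mp hj)
        (Finset.mem_biUnion.mpr ⟨i, hRA hi, by simp [ht, hne]⟩)
  · rintro ⟨R, S, hcard, hzero⟩
    apply Finset.sum_eq_zero
    intro τ _
    have hex : ∃ i ∈ R, τ i ∈ S := by
      by_contra hno
      push_neg at hno
      have hsub : R.image τ ⊆ Sᶜ := fun j hj => by
        obtain ⟨i, hi, rfl⟩ := Finset.mem_image.mp hj
        exact Finset.mem_compl.mpr (hno i hi)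
      have hle := Finset.card_le_card hsub
      rw [Finset.card_image_of_injective _ τ.injective, Finset.card_compl] at hle
      simp only [Fintype.card_fin] at hle
      have hSm : S.card ≤ m := by simpa using Finset.card_le_univ S
      omega
    obtain ⟨i, hiR, hiS⟩ := hex
    exact Finset.prod_eq_zero (Finset.mem_univ i) (hzero i hiR (τ i) hiS)
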